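/- Let H₀ > 0, l > H₀, d ∈ ℝ \ {0}, c₀ = (l/d)·√(gH₀³/(l²−H₀²)), a = H₀³/(l²−H₀²), and set φ(x,t)=sech((x−c₀t)/l). Then H = H₀ + a·φ², u = c₀·(1 − d/H), w = −(a·c₀·d/(l·H))·φ·φ', p_nh = (a·c₀²·d²/(2l²H²))·((2H₀−H)·(φ')² + H·φ·φ'') satisfy the divergence-free condition ∂_x(Hu) − u·∂_x H + 2w = 0 (flat bottom z_b = 0). -/

import Mathlib

theorem stmt12 (g H0 l d a c0 : ℝ) (hg : 0 < g) (hH0 : 0 < H0) (hl : H0 < l) (hd : d ≠ 0)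
    (ha : a = H0 ^ 3 / (l ^ 2 - H0 ^ 2))
    (hc0 : c0 = (l / d) * Real.sqrt (g * H0 ^ 3 / (l ^ 2 - H0 ^ 2)))
    (sech : ℝ → ℝ) (hsech : ∀ y, sech y = (Real.cosh y)⁻¹)
    (H u w p : ℝ → ℝ → ℝ)
    (hHdef : ∀ x t, H x t = H0 + a * (sech ((x - c0 * t) / l)) ^ 2)
    (hudef : ∀ x t, u x t = c0 * (1 - d / H x t))
    (hwdef : ∀ x t, w x t = -(a * c0 * d / (l * H x t)) * sech ((x - c0 * t) / l)
        * deriv sech ((x - c0 * t) / l))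
    (hpdef : ∀ x t, p x t = a * c0 ^ 2 * d ^ 2 / (2 * l ^ 2 * (H x t) ^ 2)
        * ((2 * H0 - H x t) * (deriv sech ((x - c0 * t) / l)) ^ 2
            + H x t * sech ((x - c0 * t) / l) * deriv (deriv sech) ((x - c0 * t) / l))) :
    ∀ x t, deriv (fun y => H y t * u y t) x - u x t * deriv (fun y => H y t) x
        + 2 * w x t = 0 := by
  have hsechfun : sech = fun y => (Real.cosh y)⁻¹ := funext hsech
  subst hsechfun
  intro x t
  have hl0 : (0:ℝ) < l := lt_trans hH0 hl
  have hlne : l ≠ 0 := ne_of_gt hl0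
  have hapos : 0 < a := by
    rw [ha]
    apply div_pos (by positivity)
    nlinarith
  set z := (x - c0 * t) / l with hz
  have hcz : Real.cosh z ≠ 0 := ne_of_gt (Real.cosh_pos z)
  -- H x t positive
  have hHpos : ∀ y, 0 < H y t := by
    intro y
    rw [hHdef]
    have : 0 ≤ a * ((Real.cosh ((y - c0 * t) / l))⁻¹) ^ 2 := by positivity
    linarith
  have hHne : H x t ≠ 0 := ne_of_gt (hHpos x)
  -- derivative of sech at z
  have hs : HasDerivAt (fun y => (Real.cosh y)⁻¹) (-Real.sinh z / Real.cosh z ^ 2) z :=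
    (Real.hasDerivAt_cosh z).inv hcz
  have hds : deriv (fun y => (Real.cosh y)⁻¹) z = -Real.sinh z / Real.cosh z ^ 2 := hs.deriv
  -- inner function derivative
  have hy : HasDerivAt (fun y => (y - c0 * t) / l) (1 / l) x := by
    simpa using ((hasDerivAt_id x).sub_const (c0 * t)).div_const l
  have hcomp : HasDerivAt (fun y => (Real.cosh ((y - c0 * t) / l))⁻¹)
      (-Real.sinh z / Real.cosh z ^ 2 * (1 / l)) x := by
    have h := hs.comp x hy
    exact h
  -- derivative of H
  set D : ℝ := a * (2 * (Real.cosh z)⁻¹ * (-Real.sinh z / Real.cosh z ^ 2 * (1 / l))) with hD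
  have hHfun : (fun y => H y t) =
      fun y => H0 + a * ((Real.cosh ((y - c0 * t) / l))⁻¹) ^ 2 :=
    funext fun y => hHdef y t
  have hHd : HasDerivAt (fun y => H y t) D x := by
    rw [hHfun]
    have h2 : HasDerivAt (fun y => ((Real.cosh ((y - c0 * t) / l))⁻¹) ^ 2)
        (2 * (Real.cosh z)⁻¹ * (-Real.sinh z / Real.cosh z ^ 2 * (1 / l))) x := by
      have := hcomp.fun_pow 2
      simpa [hz] using this
    simpa [hD] using (h2.const_mul a).const_add H0
  have hderivH : deriv (fun y => H y t) x = D := hHd.deriv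
  -- H * u = c0 * (H - d)
  have hHu : (fun y => H y t * u y t) = fun y => c0 * (H y t - d) := by
    funext y
    rw [hudef]
    field_simp [ne_of_gt (hHpos y)]
  have hHuD : deriv (fun y => H y t * u y t) x = c0 * D := by
    rw [hHu]
    exact ((hHd.sub_const d).const_mul c0).deriv
  rw [hHuD, hderivH, hudef, hwdef]
  simp only [← hz, hds, hD]
  field_simp
  ring
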